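/- The total number b_n of standard Young tableaux of size n whose shape is a hook with an additional box at position (2,2) equals (n-4)·2^{n-2} + 2 for all n ≥ 4. -/

import Mathlib

/-- A standard Young tableau on a given finite set of cells: the entries on the
cells are a bijection onto `{1, ..., #cells}`, rows and columns are strictly
increasing, and the function vanishes off the cells. Cells are `(row, column)`
pairs, `0`-indexed. -/
def IsSYTOn (cells : Finset (ℕ × ℕ)) (T : ℕ × ℕ → ℕ) : Prop :=
  Set.BijOn T ↑cells ↑(Finset.Icc 1 cells.card) ∧
  (∀ p ∈ cells, ∀ q ∈ cells, p.1 = q.1 → p.2 < q.2 → T p < T q) ∧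
  (∀ p ∈ cells, ∀ q ∈ cells, p.2 = q.2 → p.1 < q.1 → T p < T q) ∧
  (∀ p, p ∉ cells → T p = 0)

/-- The cells of a hook with an additional box at position (2,2) (1-indexed):
first row of length `a`, second row of length 2, and `b` further rows of
length 1. -/
def hookPlusCells (a b : ℕ) : Finset (ℕ × ℕ) :=
  ((Finset.range a).image fun j => (0, j)) ∪ {(1, 0), (1, 1)} ∪
    ((Finset.range b).image fun i => (i + 2, 0))

open Finset

attribute [local instance] Classical.propDecidable

lemma mem_hookPlusCells {a b : ℕ} {p : ℕ × ℕ} :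
    p ∈ hookPlusCells a b ↔
      (p.1 = 0 ∧ p.2 < a) ∨ p = (1, 1) ∨ (p.2 = 0 ∧ 1 ≤ p.1 ∧ p.1 ≤ b + 1) := by
  obtain ⟨i, j⟩ := p
  simp only [hookPlusCells, mem_union, mem_image, mem_range, mem_insert, mem_singleton,
    Prod.mk.injEq]
  constructor
  · rintro ((⟨j', hj', h1, h2⟩ | (⟨h1, h2⟩ | ⟨h1, h2⟩)) | ⟨i', hi', h1, h2⟩) <;> omega
  · rintro (⟨h1, h2⟩ | ⟨h1, h2⟩ | ⟨h1, h2, h3⟩)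
    · exact Or.inl (Or.inl ⟨j, h2, h1.symm, rfl⟩)
    · exact Or.inl (Or.inr (Or.inr ⟨h1, h2⟩))
    · rcases Nat.eq_or_lt_of_le h2 with h | h
      · exact Or.inl (Or.inr (Or.inl ⟨h.symm, h1⟩))
      · exact Or.inr ⟨i - 2, by omega, by omega, h1.symm⟩

lemma card_hookPlusCells (a b : ℕ) : (hookPlusCells a b).card = a + b + 2 := by
  have hA : ∀ p ∈ (Finset.range a).image fun j => ((0 : ℕ), j), p.1 = 0 := by
    intro p hp
    obtain ⟨j, _, rfl⟩ := mem_image.1 hp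
    rfl
  have hB : ∀ p ∈ ({(1, 0), (1, 1)} : Finset (ℕ × ℕ)), p.1 = 1 := by
    intro p hp
    rcases mem_insert.1 hp with rfl | hp
    · rfl
    · rw [mem_singleton.1 hp]
  have hC : ∀ p ∈ (Finset.range b).image fun i => (i + 2, (0 : ℕ)), 2 ≤ p.1 := by
    intro p hp
    obtain ⟨i, _, rfl⟩ := mem_image.1 hp
    omega
  rw [hookPlusCells, card_union_of_disjoint, card_union_of_disjoint]
  · rw [card_image_of_injective _ (fun x y h => by simpa using h),
      card_image_of_injective _ (fun x y h => by
        simp only [Prod.mk.injEq] at h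
        omega)]
    simp only [card_range]
    rw [card_insert_of_notMem (by simp), card_singleton]
    ring
  · rw [disjoint_left]
    intro p hp hp'
    have := hA p hp
    have := hB p hp'
    omega
  · rw [disjoint_left]
    intro p hp hp'
    have := hC p hp'
    rcases mem_union.1 hp with h | h
    · have := hA p h; omega
    · have := hB p h; omega

-- sorted list helpers
section SortLemmas
variable (s : Finset ℕ)

lemma sortD_mem {i : ℕ} (hi : i < s.card) : (s.sort (· ≤ ·)).getD i 0 ∈ s := by
  rw [List.getD_eq_getElem _ _ (by rwa [Finset.length_sort])]
  rw [← Finset.mem_sort (α := ℕ) (· ≤ ·)]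
  exact List.getElem_mem _

lemma sortD_strictMono {i j : ℕ} (hij : i < j) (hj : j < s.card) :
    (s.sort (· ≤ ·)).getD i 0 < (s.sort (· ≤ ·)).getD j 0 := by
  have hl : j < (s.sort (· ≤ ·)).length := by rwa [Finset.length_sort]
  rw [List.getD_eq_getElem _ _ (lt_trans hij hl), List.getD_eq_getElem _ _ hl]
  have := (Finset.sortedLT_sort s).pairwise
  rw [List.pairwise_iff_get] at this
  exact this ⟨i, lt_trans hij hl⟩ ⟨j, hl⟩ hij

lemma sortD_surj {x : ℕ} (hx : x ∈ s) : ∃ i < s.card, (s.sort (· ≤ ·)).getD i 0 = x := by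
  rw [← Finset.mem_sort (α := ℕ) (· ≤ ·), List.mem_iff_get] at hx
  obtain ⟨⟨i, hi⟩, h⟩ := hx
  refine ⟨i, by rwa [Finset.length_sort] at hi, ?_⟩
  rw [List.getD_eq_getElem _ _ hi, ← h, List.get_eq_getElem]

lemma sortD_le {i : ℕ} {x : ℕ} (hx : x ∈ s) (hi : ∀ j < i, (s.sort (· ≤ ·)).getD j 0 ≠ x) :
    (s.sort (· ≤ ·)).getD i 0 ≤ x := by
  obtain ⟨j, hj, hjx⟩ := sortD_surj s hx
  have hij : i ≤ j := by
    by_contra h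
    exact hi j (by omega) hjx
  rcases Nat.eq_or_lt_of_le hij with rfl | h
  · omega
  · exact le_of_lt (hjx ▸ sortD_strictMono s h hj)

end SortLemmas

-- uniqueness of strictly monotone enumerations
lemma enum_unique {k : ℕ} {f g : ℕ → ℕ}
    (hf : ∀ i j, i < j → j < k → f i < f j) (hg : ∀ i j, i < j → j < k → g i < g j)
    (him : (Finset.range k).image f = (Finset.range k).image g) :
    ∀ i < k, f i = g i := by
  classical
  haveI : IsAntisymm ℕ (· < ·) := ⟨fun a b h h' => absurd h' (lt_asymm h)⟩
  have toFmap : ∀ (h : ℕ → ℕ), ((List.range k).map h).toFinset = (Finset.range k).image h := by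
    intro h
    have h1 : ∀ l : List ℕ, (l.map h).toFinset = l.toFinset.image h := by
      intro l
      induction l with
      | nil => simp
      | cons a l ih => simp [ih]
    have h2 : ∀ m : ℕ, (List.range m).toFinset = Finset.range m := by
      intro m
      induction m with
      | zero => simp
      | succ m ihm =>
        rw [List.range_succ, List.toFinset_append, ihm]
        ext x
        simp only [Finset.mem_union, Finset.mem_range, List.toFinset_cons, List.toFinset_nil,
          insert_empty_eq, Finset.mem_singleton]
        omega
    rw [h1, h2]
  have sorted : ∀ (h : ℕ → ℕ), (∀ i j, i < j → j < k → h i < h j) →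
      ((List.range k).map h).Pairwise (· < ·) := by
    intro h hh
    rw [List.pairwise_iff_get]
    intro i j hij
    have hi' : (i : ℕ) < k := by
      have := j.2; simp only [List.length_map, List.length_range] at this ⊢
      omega
    have hj' : (j : ℕ) < k := by
      have := j.2; simpa only [List.length_map, List.length_range] using this
    simp only [List.get_eq_getElem, List.getElem_map, List.getElem_range]
    exact hh _ _ hij hj'
  have hsf := sorted f hf
  have hsg := sorted g hg
  have heq : (List.range k).map f = (List.range k).map g := by
    apply List.Perm.eq_of_pairwise' hsf hsg
    apply List.perm_of_nodup_nodup_toFinset_eq hsf.nodup hsg.nodup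
    rw [toFmap, toFmap]
    exact him
  intro i hi
  have h1 := congrArg (fun l => l.getD i 0) heq
  simpa [List.getD_eq_getElem, hi] using h1

noncomputable def innerSet (n m : ℕ) : Finset (Finset ℕ) :=
  @Finset.filter _ (fun C =>
      m ∉ C ∧ (∃ x ∈ C, x < m) ∧ ∃ x ∈ Finset.Icc 2 n, x ∉ C ∧ x < m)
    (fun _ => Classical.propDecidable _) (Finset.Icc 2 n).powerset

noncomputable def encSet (n : ℕ) : Finset (ℕ × Finset ℕ) :=
  (Finset.Icc 2 n).biUnion fun m => (innerSet n m).image (Prod.mk m)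

lemma innerSet_card_lt (n m : ℕ) (hm : m < 4) : innerSet n m = ∅ := by
  ext C
  simp only [innerSet, mem_filter, mem_powerset, notMem_empty, iff_false, not_and]
  rintro hC hmC ⟨x, hxC, hxm⟩ ⟨y, hy, hyC, hym⟩
  have hx2 := (mem_Icc.1 (hC hxC)).1
  have hy2 := (mem_Icc.1 hy).1
  have : x = y := by omega
  exact hyC (this ▸ hxC)

lemma innerSet_card (n m : ℕ) (hm4 : 4 ≤ m) (hmn : m ≤ n) :
    (innerSet n m).card = (2 ^ (m - 2) - 2) * 2 ^ (n - m) := by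
  classical
  set low := Finset.Ico 2 m with hlow
  set high := Finset.Ioc m n with hhigh
  have hcard : (innerSet n m).card =
      ((low.powerset.filter fun D => D ≠ ∅ ∧ D ≠ low) ×ˢ high.powerset).card := by
    apply Finset.card_nbij (fun C => (C ∩ low, C ∩ high))
    · intro C hC
      simp only [innerSet, mem_coe, mem_filter, mem_powerset] at hC
      obtain ⟨hCsub, hmC, ⟨x, hxC, hxm⟩, ⟨y, hy, hyC, hym⟩⟩ := hC
      simp only [mem_coe, mem_product, mem_filter, mem_powerset]
      refine ⟨⟨inter_subset_right, ?_, ?_⟩, inter_subset_right⟩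
      · have hx2 := (mem_Icc.1 (hCsub hxC)).1
        have : x ∈ C ∩ low := by simp [hlow, mem_Ico, hxC, hx2, hxm]
        exact ne_empty_of_mem this
      · intro h
        have hy2 := (mem_Icc.1 hy).1
        have : y ∈ low := by simp [hlow, mem_Ico, hy2, hym]
        rw [← h] at this
        exact hyC (mem_inter.1 this).1
    · intro C hC C' hC' hEq
      simp only [innerSet, coe_filter, Set.mem_setOf_eq, mem_powerset] at hC hC'
      have h1 : C ∩ low = C' ∩ low := congrArg Prod.fst hEq
      have h2 : C ∩ high = C' ∩ high := congrArg Prod.snd hEq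
      have key : ∀ (D : Finset ℕ), D ⊆ Finset.Icc 2 n → m ∉ D →
          D = D ∩ low ∪ D ∩ high := by
        intro D hD hmD
        ext z
        simp only [mem_union, mem_inter, hlow, hhigh, mem_Ico, mem_Ioc]
        constructor
        · intro hz
          have h2 := mem_Icc.1 (hD hz)
          have hzm : z ≠ m := fun h => hmD (h ▸ hz)
          rcases lt_or_gt_of_ne hzm with h | h
          · exact Or.inl ⟨hz, by omega⟩
          · exact Or.inr ⟨hz, by omega⟩
        · rintro (⟨h, _⟩ | ⟨h, _⟩) <;> exact h
      rw [key C hC.1 hC.2.1, key C' hC'.1 hC'.2.1, h1, h2]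
    · intro p hp
      simp only [coe_product, Set.mem_prod, mem_coe, mem_filter, mem_powerset] at hp
      obtain ⟨⟨hD, hDne, hDlow⟩, hE⟩ := hp
      refine ⟨p.1 ∪ p.2, ?_, ?_⟩
      · simp only [innerSet, mem_coe, mem_filter, mem_powerset]
        have hlowsub : low ⊆ Finset.Icc 2 n := by
          intro z hz; simp only [hlow, mem_Ico] at hz; simp [mem_Icc]; omega
        have hhighsub : high ⊆ Finset.Icc 2 n := by
          intro z hz; simp only [hhigh, mem_Ioc] at hz; simp [mem_Icc]; omega
        refine ⟨union_subset (hD.trans hlowsub) (hE.trans hhighsub), ?_, ?_, ?_⟩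
        · intro h
          rcases mem_union.1 h with h | h
          · have := mem_Ico.1 (hD h); omega
          · have := mem_Ioc.1 (hE h); omega
        · obtain ⟨x, hx⟩ := nonempty_iff_ne_empty.2 hDne
          exact ⟨x, mem_union_left _ hx, (mem_Ico.1 (hD hx)).2⟩
        · obtain ⟨y, hyl, hyD⟩ := exists_of_ssubset (Finset.ssubset_iff_subset_ne.2 ⟨hD, hDlow⟩)
          have hy := mem_Ico.1 hyl
          refine ⟨y, ?_, ?_, hy.2⟩
          · simp [mem_Icc]; omega
          · intro h
            rcases mem_union.1 h with h | h
            · exact hyD h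
            · have := mem_Ioc.1 (hE h); omega
      · have hDl : p.1 ∩ low = p.1 := inter_eq_left.2 hD
        have hEh : p.2 ∩ high = p.2 := inter_eq_left.2 hE
        have hDh : p.1 ∩ high = ∅ := by
          rw [eq_empty_iff_forall_notMem]
          intro z hz
          have h1 := mem_Ico.1 (hD (mem_inter.1 hz).1)
          have h2 := mem_Ioc.1 (mem_inter.1 hz).2
          omega
        have hEl : p.2 ∩ low = ∅ := by
          rw [eq_empty_iff_forall_notMem]
          intro z hz
          have h1 := mem_Ioc.1 (hE (mem_inter.1 hz).1)
          have h2 := mem_Ico.1 (mem_inter.1 hz).2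
          omega
        ext1 <;> simp only [union_inter_distrib_right, hDl, hEh, hDh, hEl,
          union_empty, empty_union]
  rw [hcard, card_product, card_powerset]
  congr 1
  · have : (low.powerset.filter fun D => D ≠ ∅ ∧ D ≠ low) =
        (low.powerset \ {∅, low}) := by
      ext D
      simp only [mem_filter, mem_sdiff, mem_powerset, mem_insert, mem_singleton]
      tauto
    rw [this, card_sdiff_of_subset]
    · rw [card_powerset]
      have : ({∅, low} : Finset (Finset ℕ)).card = 2 := by
        rw [card_insert_of_notMem, card_singleton]
        simp only [mem_singleton]
        intro h
        have : low.card = 0 := by rw [← h]; simp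
        rw [Nat.card_Ico] at this
        omega
      rw [this]
      congr 1
      rw [Nat.card_Ico]
    · intro D hD
      simp only [mem_insert, mem_singleton] at hD
      rcases hD with rfl | rfl <;> simp
  · congr 1
    rw [Nat.card_Ioc]

lemma sum_formula (k : ℕ) :
    ∑ m ∈ Finset.Icc 4 (k + 4), (2 ^ (m - 2) - 2) * 2 ^ (k + 4 - m) = k * 2 ^ (k + 2) + 2 := by
  induction k with
  | zero => simp
  | succ k ih =>
    have h : k + 4 + 1 = (k + 4) + 1 := rfl
    rw [show k + 1 + 4 = (k + 4) + 1 by ring, Finset.sum_Icc_succ_top (by omega)]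
    have : ∑ m ∈ Finset.Icc 4 (k + 4), (2 ^ (m - 2) - 2) * 2 ^ (k + 4 + 1 - m) =
        2 * ∑ m ∈ Finset.Icc 4 (k + 4), (2 ^ (m - 2) - 2) * 2 ^ (k + 4 - m) := by
      rw [Finset.mul_sum]
      apply Finset.sum_congr rfl
      intro m hm
      have hm' := Finset.mem_Icc.1 hm
      have : k + 4 + 1 - m = (k + 4 - m) + 1 := by omega
      rw [this, pow_succ]
      ring
    rw [this, ih]
    have h2 : (2:ℕ) ≤ 2 ^ (k + 4 + 1 - 2) := by
      calc (2:ℕ) ≤ 2 ^ 1 := by norm_num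
      _ ≤ 2 ^ (k + 4 + 1 - 2) := Nat.pow_le_pow_right (by norm_num) (by omega)
    rw [Nat.sub_self, pow_zero, mul_one, show k + 4 + 1 - 2 = k + 3 from by omega]
    have h5 : (2:ℕ) ≤ 2 ^ (k+3) := by
      calc (2:ℕ) = 2 ^ 1 := by norm_num
      _ ≤ 2 ^ (k + 3) := Nat.pow_le_pow_right (by norm_num) (by omega)
    have e1 : 2 * (k * 2 ^ (k + 2) + 2) = k * 2 ^ (k + 3) + 4 := by ring
    have e2 : (k + 1) * 2 ^ (k + 1 + 2) = k * 2 ^ (k + 3) + 2 ^ (k + 3) := by ring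
    omega

lemma encSet_card (n : ℕ) (hn : 4 ≤ n) :
    (encSet n).card = (n - 4) * 2 ^ (n - 2) + 2 := by
  rw [encSet, card_biUnion]
  · have h1 : ∀ m ∈ Finset.Icc 2 n, ((innerSet n m).image (Prod.mk m)).card
        = (innerSet n m).card := by
      intro m _
      exact card_image_of_injective _ (fun a b h => by injection h)
    rw [Finset.sum_congr rfl h1]
    have hsplit : Finset.Icc 2 n = Finset.Icc 2 3 ∪ Finset.Icc 4 n := by
      ext z; simp only [mem_Icc, mem_union]; omega
    rw [hsplit, Finset.sum_union (by
      rw [Finset.disjoint_left]; intro z hz hz'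
      simp only [mem_Icc] at hz hz'; omega)]
    have h2 : ∑ m ∈ Finset.Icc 2 3, (innerSet n m).card = 0 := by
      apply Finset.sum_eq_zero
      intro m hm
      rw [innerSet_card_lt n m (by simp only [mem_Icc] at hm; omega)]
      simp
    rw [h2, zero_add]
    have h3 : ∑ m ∈ Finset.Icc 4 n, (innerSet n m).card
        = ∑ m ∈ Finset.Icc 4 n, (2 ^ (m - 2) - 2) * 2 ^ (n - m) := by
      apply Finset.sum_congr rfl
      intro m hm
      simp only [mem_Icc] at hm
      exact innerSet_card n m hm.1 hm.2
    rw [h3]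
    obtain ⟨k, rfl⟩ : ∃ k, n = k + 4 := ⟨n - 4, by omega⟩
    rw [sum_formula k, show k + 4 - 4 = k from by omega, show k + 4 - 2 = k + 2 from by omega]
  · intro x _ y _ hxy
    rw [Function.onFun, Finset.disjoint_left]
    intro p hp hp'
    simp only [mem_image] at hp hp'
    obtain ⟨C, _, rfl⟩ := hp
    obtain ⟨C', _, h⟩ := hp'
    exact hxy (by injection h; omega)

lemma construct (n m : ℕ) (C : Finset ℕ) (hn : 4 ≤ n) (hC : C ⊆ Finset.Icc 2 n)
    (hm : m ∈ Finset.Icc 2 n) (hmC : m ∉ C) (hx : ∃ x ∈ C, x < m)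
    (hy : ∃ y ∈ Finset.Icc 2 n, y ∉ C ∧ y < m) :
    ∃ T : ℕ × ℕ → ℕ, (∃ a b : ℕ, 2 ≤ a ∧ a + 2 + b = n ∧ IsSYTOn (hookPlusCells a b) T) ∧
      T (1, 1) = m ∧ ((Finset.Icc 1 n).image fun i => T (i, 0)).erase 0 = C := by
  obtain ⟨x₀, hx₀C, hx₀m⟩ := hx
  obtain ⟨y₀, hy₀I, hy₀C, hy₀m⟩ := hy
  rw [mem_Icc] at hm hy₀I
  have hx₀2 : 2 ≤ x₀ := (mem_Icc.1 (hC hx₀C)).1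
  have hCpos : 1 ≤ C.card := Finset.card_pos.2 ⟨x₀, hx₀C⟩
  have hCub : C.card + 2 ≤ n - 1 := by
    have hsub : insert m (insert y₀ C) ⊆ Finset.Icc 2 n := by
      intro z hz
      rcases mem_insert.1 hz with rfl | hz
      · exact mem_Icc.2 hm
      · rcases mem_insert.1 hz with rfl | hz
        · exact mem_Icc.2 hy₀I
        · exact hC hz
    have hcard : (insert m (insert y₀ C)).card = C.card + 2 := by
      rw [card_insert_of_notMem (by
        intro h
        rcases mem_insert.1 h with rfl | h
        · omega
        · exact hmC h), card_insert_of_notMem hy₀C]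
    have := card_le_card hsub
    rw [hcard, Nat.card_Icc] at this
    omega
  set b := C.card - 1 with hb
  set a := n - C.card - 1 with ha
  have ha2 : 2 ≤ a := by omega
  have habn : a + 2 + b = n := by omega
  have hCcard : C.card = b + 1 := by omega
  set R := Finset.Icc 1 n \ insert m C with hRdef
  have hmCsub : insert m C ⊆ Finset.Icc 1 n := by
    intro z hz
    rcases mem_insert.1 hz with rfl | hz
    · exact mem_Icc.2 ⟨by omega, by omega⟩
    · have := mem_Icc.1 (hC hz); exact mem_Icc.2 ⟨by omega, this.2⟩
  have hRcard : R.card = a := by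
    rw [hRdef, card_sdiff_of_subset hmCsub, Nat.card_Icc, card_insert_of_notMem hmC]
    omega
  have hRIcc : R ⊆ Finset.Icc 1 n := sdiff_subset
  have h1R : (1 : ℕ) ∈ R := by
    rw [hRdef, mem_sdiff, mem_insert]
    refine ⟨mem_Icc.2 ⟨le_refl 1, by omega⟩, ?_⟩
    push_neg
    refine ⟨by omega, fun h => ?_⟩
    have := (mem_Icc.1 (hC h)).1
    omega
  have hy₀R : y₀ ∈ R := by
    rw [hRdef, mem_sdiff, mem_insert]
    exact ⟨mem_Icc.2 ⟨by omega, hy₀I.2⟩, by push_neg; exact ⟨by omega, hy₀C⟩⟩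
  set T : ℕ × ℕ → ℕ := fun p =>
    if p.1 = 0 ∧ p.2 < a then (R.sort (· ≤ ·)).getD p.2 0
    else if p = (1, 1) then m
    else if p.2 = 0 ∧ 1 ≤ p.1 ∧ p.1 ≤ b + 1 then (C.sort (· ≤ ·)).getD (p.1 - 1) 0
    else 0 with hT
  have hTrow : ∀ j, j < a → T (0, j) = (R.sort (· ≤ ·)).getD j 0 := by
    intro j hj
    show (if (0 : ℕ) = 0 ∧ j < a then (R.sort (· ≤ ·)).getD j 0 else _) = _
    rw [if_pos ⟨rfl, hj⟩]
  have hT11 : T (1, 1) = m := by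
    show (if (1 : ℕ) = 0 ∧ (1:ℕ) < a then _ else if ((1:ℕ),(1:ℕ)) = (1, 1) then m else _) = m
    rw [if_neg (by simp), if_pos rfl]
  have hTcol : ∀ i, 1 ≤ i → i ≤ b + 1 → T (i, 0) = (C.sort (· ≤ ·)).getD (i - 1) 0 := by
    intro i h1 h2
    show (if i = 0 ∧ (0:ℕ) < a then _
      else if (i, (0:ℕ)) = (1, 1) then _
      else if (0:ℕ) = 0 ∧ 1 ≤ i ∧ i ≤ b + 1 then (C.sort (· ≤ ·)).getD (i - 1) 0 else 0) = _
    rw [if_neg (by omega), if_neg (by simp [Prod.ext_iff]), if_pos ⟨rfl, h1, h2⟩]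
  have hT0 : ∀ p, p ∉ hookPlusCells a b → T p = 0 := by
    intro p hp
    rw [mem_hookPlusCells] at hp
    push_neg at hp
    obtain ⟨hp1, hp2, hp3⟩ := hp
    show (if p.1 = 0 ∧ p.2 < a then _ else if p = (1,1) then _
      else if p.2 = 0 ∧ 1 ≤ p.1 ∧ p.1 ≤ b + 1 then _ else 0) = 0
    rw [if_neg (fun h => absurd h.2 (not_lt.2 (hp1 h.1))), if_neg hp2,
      if_neg (fun h => by have := hp3 h.1; omega)]
  -- value facts
  have hrow_mem : ∀ j, j < a → (R.sort (· ≤ ·)).getD j 0 ∈ R := fun j hj =>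
    sortD_mem R (by omega)
  have hcol_mem : ∀ i, i < b + 1 → (C.sort (· ≤ ·)).getD i 0 ∈ C := fun i hi =>
    sortD_mem C (by omega)
  have hR_not_m : ∀ z ∈ R, z ≠ m := by
    intro z hz h
    rw [hRdef, mem_sdiff] at hz
    exact hz.2 (h ▸ mem_insert_self m C)
  have hR_not_C : ∀ z ∈ R, z ∉ C := by
    intro z hz h
    rw [hRdef, mem_sdiff] at hz
    exact hz.2 (mem_insert_of_mem h)
  have hR1 : (R.sort (· ≤ ·)).getD 0 0 = 1 := by
    have h1 := sortD_le R (i := 0) h1R (by intro j hj; omega)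
    have h2 := (mem_Icc.1 (hRIcc (hrow_mem 0 (by omega)))).1
    omega
  have hR2m : (R.sort (· ≤ ·)).getD 1 0 < m := by
    have h1 : (R.sort (· ≤ ·)).getD 1 0 ≤ y₀ := by
      apply sortD_le R (i := 1) hy₀R
      intro j hj
      have : j = 0 := by omega
      rw [this, hR1]
      omega
    omega
  have hC0m : (C.sort (· ≤ ·)).getD 0 0 < m := by
    have h1 := sortD_le C (i := 0) hx₀C (by intro j hj; omega)
    omega
  have hCge2 : ∀ z ∈ C, 2 ≤ z := fun z hz => (mem_Icc.1 (hC hz)).1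
  have hcells : (hookPlusCells a b).card = n := by rw [card_hookPlusCells]; omega
  refine ⟨T, ⟨a, b, ha2, habn, ?_, ?_, ?_, hT0⟩, hT11, ?_⟩
  · -- BijOn
    rw [hcells]
    refine ⟨?_, ?_, ?_⟩
    · -- MapsTo
      intro p hp
      rw [mem_coe, mem_hookPlusCells] at hp
      rcases hp with ⟨h1, h2⟩ | rfl | ⟨h1, h2, h3⟩
      · obtain ⟨i, j⟩ := p
        simp only at h1 h2
        subst h1
        rw [hTrow j h2]
        exact hRIcc (hrow_mem j h2)
      · rw [hT11]
        simp only [coe_Icc, Set.mem_Icc]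
        omega
      · obtain ⟨i, j⟩ := p
        simp only at h1 h2 h3
        subst h1
        rw [hTcol i h2 h3]
        have := mem_Icc.1 (hC (hcol_mem (i - 1) (by omega)))
        simp only [coe_Icc, Set.mem_Icc]
        omega
    · -- InjOn
      intro p hp q hq hpq
      rw [mem_coe, mem_hookPlusCells] at hp hq
      obtain ⟨pi, pj⟩ := p
      obtain ⟨qi, qj⟩ := q
      have keyR : ∀ z, z ∈ R → z ≠ m ∧ z ∉ C := fun z hz => ⟨hR_not_m z hz, hR_not_C z hz⟩
      rcases hp with ⟨h1, h2⟩ | heq | ⟨h1, h2, h3⟩ <;>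
        rcases hq with ⟨g1, g2⟩ | geq | ⟨g1, g2, g3⟩
      · simp only at h1 h2 g1 g2
        subst h1; subst g1
        rw [hTrow pj h2, hTrow qj g2] at hpq
        rcases lt_trichotomy pj qj with h | h | h
        · exact absurd hpq (ne_of_lt (sortD_strictMono R h (by omega)))
        · rw [h]
        · exact absurd hpq.symm (ne_of_lt (sortD_strictMono R h (by omega)))
      · simp only at h1 h2
        subst h1
        rw [Prod.mk.injEq] at geq
        obtain ⟨rfl, rfl⟩ := geq
        rw [hTrow pj h2, hT11] at hpq
        exact absurd hpq (hR_not_m _ (hrow_mem pj h2))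
      · simp only at h1 h2 g1 g2 g3
        subst h1; subst g1
        rw [hTrow pj h2, hTcol qi g2 g3] at hpq
        exact absurd (hpq ▸ hcol_mem (qi - 1) (by omega)) (hR_not_C _ (hrow_mem pj h2))
      · rw [Prod.mk.injEq] at heq
        obtain ⟨rfl, rfl⟩ := heq
        simp only at g1 g2
        subst g1
        rw [hTrow qj g2, hT11] at hpq
        exact absurd hpq.symm (hR_not_m _ (hrow_mem qj g2))
      · rw [Prod.mk.injEq] at heq geq
        obtain ⟨rfl, rfl⟩ := heq
        obtain ⟨rfl, rfl⟩ := geq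
        rfl
      · rw [Prod.mk.injEq] at heq
        obtain ⟨rfl, rfl⟩ := heq
        simp only at g1 g2 g3
        subst g1
        rw [hT11, hTcol qi g2 g3] at hpq
        exact absurd (hpq ▸ hcol_mem (qi - 1) (by omega)) hmC
      · simp only at h1 h2 h3 g1 g2
        subst g1; subst h1
        rw [hTcol pi h2 h3, hTrow qj g2] at hpq
        exact absurd (hpq ▸ hcol_mem (pi - 1) (by omega)) (hR_not_C _ (hrow_mem qj g2))
      · rw [Prod.mk.injEq] at geq
        obtain ⟨rfl, rfl⟩ := geq
        simp only at h1 h2 h3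
        subst h1
        rw [hTcol pi h2 h3, hT11] at hpq
        exact absurd (hpq ▸ hcol_mem (pi - 1) (by omega)) hmC
      · simp only at h1 h2 h3 g1 g2 g3
        subst h1; subst g1
        rw [hTcol pi h2 h3, hTcol qi g2 g3] at hpq
        rcases lt_trichotomy pi qi with h | h | h
        · exact absurd hpq (ne_of_lt (sortD_strictMono C (by omega) (by omega)))
        · rw [h]
        · exact absurd hpq.symm (ne_of_lt (sortD_strictMono C (by omega) (by omega)))
    · -- SurjOn
      intro y hy
      simp only [coe_Icc, Set.mem_Icc] at hy
      by_cases hym : y = m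
      · refine ⟨(1, 1), ?_, by rw [hT11, hym]⟩
        rw [mem_coe, mem_hookPlusCells]
        exact Or.inr (Or.inl rfl)
      by_cases hyC : y ∈ C
      · obtain ⟨i, hi, hieq⟩ := sortD_surj C hyC
        refine ⟨(i + 1, 0), ?_, ?_⟩
        · rw [mem_coe, mem_hookPlusCells]
          exact Or.inr (Or.inr ⟨rfl, by omega, by omega⟩)
        · rw [hTcol (i + 1) (by omega) (by omega)]
          rw [show i + 1 - 1 = i from rfl]
          exact hieq
      · have hyR : y ∈ R := by
          rw [hRdef, mem_sdiff, mem_insert]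
          push_neg
          exact ⟨mem_Icc.2 hy, hym, hyC⟩
        obtain ⟨j, hj, hjeq⟩ := sortD_surj R hyR
        refine ⟨(0, j), ?_, ?_⟩
        · rw [mem_coe, mem_hookPlusCells]
          exact Or.inl ⟨rfl, by omega⟩
        · rw [hTrow j (by omega)]
          exact hjeq
  · -- row condition
    intro p hp q hq hrow hcol
    rw [mem_hookPlusCells] at hp hq
    obtain ⟨pi, pj⟩ := p
    obtain ⟨qi, qj⟩ := q
    simp only at hrow hcol
    rcases hp with ⟨h1, h2⟩ | heq | ⟨h1, h2, h3⟩
    · simp only at h1 h2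
      subst h1
      rcases hq with ⟨g1, g2⟩ | geq | ⟨g1, g2, g3⟩
      · simp only at g1 g2
        subst g1
        rw [hTrow pj h2, hTrow qj g2]
        exact sortD_strictMono R hcol (by omega)
      · rw [Prod.mk.injEq] at geq; omega
      · simp only at g1 g2 g3; omega
    · rw [Prod.mk.injEq] at heq
      obtain ⟨rfl, rfl⟩ := heq
      rcases hq with ⟨g1, g2⟩ | geq | ⟨g1, g2, g3⟩
      · simp only at g1 g2; omega
      · rw [Prod.mk.injEq] at geq; omega
      · simp only at g1 g2 g3; omega
    · simp only at h1 h2 h3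
      subst h1
      rcases hq with ⟨g1, g2⟩ | geq | ⟨g1, g2, g3⟩
      · simp only at g1 g2; omega
      · rw [Prod.mk.injEq] at geq
        obtain ⟨rfl, rfl⟩ := geq
        subst hrow
        rw [hTcol 1 le_rfl (by omega), hT11]
        simpa using hC0m
      · simp only at g1 g2 g3; omega
  · -- column condition
    intro p hp q hq hcol hrow
    rw [mem_hookPlusCells] at hp hq
    obtain ⟨pi, pj⟩ := p
    obtain ⟨qi, qj⟩ := q
    simp only at hrow hcol
    rcases hq with ⟨g1, g2⟩ | geq | ⟨g1, g2, g3⟩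
    · simp only at g1 g2; omega
    · rw [Prod.mk.injEq] at geq
      obtain ⟨rfl, rfl⟩ := geq
      -- p is (0, 1)
      rcases hp with ⟨h1, h2⟩ | heq | ⟨h1, h2, h3⟩
      · simp only at h1 h2
        subst h1
        have : pj = 1 := hcol
        subst this
        rw [hTrow 1 (by omega), hT11]
        exact hR2m
      · rw [Prod.mk.injEq] at heq; omega
      · simp only at h1 h2 h3; omega
    · simp only at g1 g2 g3
      subst g1
      rcases hp with ⟨h1, h2⟩ | heq | ⟨h1, h2, h3⟩
      · simp only at h1 h2
        subst h1
        have : pj = 0 := hcol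
        subst this
        rw [hTrow 0 (by omega), hTcol qi g2 g3, hR1]
        have := hCge2 _ (hcol_mem (qi - 1) (by omega))
        omega
      · rw [Prod.mk.injEq] at heq; omega
      · simp only at h1 h2 h3
        subst h1
        rw [hTcol pi h2 h3, hTcol qi g2 g3]
        exact sortD_strictMono C (by omega) (by omega)
  · -- Φ snd
    ext z
    simp only [mem_erase, mem_image, mem_Icc]
    constructor
    · rintro ⟨hz0, i, hi, rfl⟩
      by_cases hib : i ≤ b + 1
      · rw [hTcol i hi.1 hib]
        exact hcol_mem (i - 1) (by omega)
      · exfalso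
        apply hz0
        apply hT0
        rw [mem_hookPlusCells]
        push_neg
        refine ⟨fun h => absurd h (by omega), ?_, fun _ _ => by omega⟩
        intro h
        rw [Prod.mk.injEq] at h
        omega
    · intro hz
      obtain ⟨i, hi, hieq⟩ := sortD_surj C hz
      refine ⟨by have := hCge2 z hz; omega, i + 1, ⟨by omega, by omega⟩, ?_⟩
      rw [hTcol (i + 1) (by omega) (by omega), show i + 1 - 1 = i from rfl]
      exact hieq

lemma forward (n a b : ℕ) (T : ℕ × ℕ → ℕ) (ha : 2 ≤ a) (habn : a + 2 + b = n)
    (hS : IsSYTOn (hookPlusCells a b) T) :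
    (((Finset.Icc 1 n).image fun i => T (i, 0)).erase 0
        = (Finset.range (b + 1)).image fun i => T (i + 1, 0)) ∧
    (T (1, 1), (Finset.range (b + 1)).image fun i => T (i + 1, 0)) ∈ encSet n ∧
    ((Finset.range (b + 1)).image fun i => T (i + 1, 0)).card = b + 1 ∧
    ((Finset.range a).image fun j => T (0, j))
        = Finset.Icc 1 n \ insert (T (1, 1))
            ((Finset.range (b + 1)).image fun i => T (i + 1, 0)) := by
  obtain ⟨hB, hrow, hcol, h0⟩ := hS
  have hcells : (hookPlusCells a b).card = n := by rw [card_hookPlusCells]; omega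
  rw [hcells] at hB
  have hcellrow : ∀ j, j < a → (0, j) ∈ hookPlusCells a b := fun j hj =>
    mem_hookPlusCells.2 (Or.inl ⟨rfl, hj⟩)
  have hcellcol : ∀ i, i < b + 1 → (i + 1, 0) ∈ hookPlusCells a b := fun i hi =>
    mem_hookPlusCells.2 (Or.inr (Or.inr ⟨rfl, by omega, by omega⟩))
  have hcell11 : (1, 1) ∈ hookPlusCells a b := mem_hookPlusCells.2 (Or.inr (Or.inl rfl))
  have hval : ∀ p ∈ hookPlusCells a b, T p ∈ Finset.Icc 1 n := by
    intro p hp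
    have := hB.mapsTo (Finset.mem_coe.2 hp)
    rwa [← Finset.mem_coe]
  have hinj : ∀ p ∈ hookPlusCells a b, ∀ q ∈ hookPlusCells a b, T p = T q → p = q :=
    fun p hp q hq h => hB.injOn (Finset.mem_coe.2 hp) (Finset.mem_coe.2 hq) h
  have hcolge2 : ∀ i, i < b + 1 → 2 ≤ T (i + 1, 0) := by
    intro i hi
    have h1 := hcol (0, 0) (hcellrow 0 (by omega)) (i + 1, 0) (hcellcol i hi) rfl (by omega)
    have h2 := (mem_Icc.1 (hval _ (hcellrow 0 (by omega)))).1
    omega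
  have hm2 : 2 ≤ T (1, 1) := by
    have h1 := hrow (1, 0) (hcellcol 0 (by omega)) (1, 1) hcell11 rfl (by omega)
    have h2 : 1 ≤ T (1, 0) := (mem_Icc.1 (hval _ (hcellcol 0 (by omega)))).1
    omega
  have hbn : b + 1 ≤ n := by omega
  have h1 : ((Finset.Icc 1 n).image fun i => T (i, 0)).erase 0
      = (Finset.range (b + 1)).image fun i => T (i + 1, 0) := by
    ext z
    simp only [mem_erase, mem_image, mem_Icc, mem_range]
    constructor
    · rintro ⟨hz0, i, hi, rfl⟩
      by_cases hib : i ≤ b + 1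
      · exact ⟨i - 1, by omega, by rw [show i - 1 + 1 = i from by omega]⟩
      · exfalso
        apply hz0
        apply h0
        rw [mem_hookPlusCells]
        push_neg
        refine ⟨fun h => by omega, ?_, fun _ _ => by omega⟩
        intro h
        rw [Prod.mk.injEq] at h
        omega
    · rintro ⟨i, hi, rfl⟩
      have h2 := (mem_Icc.1 (hval _ (hcellcol i hi))).1
      exact ⟨by omega, i + 1, ⟨by omega, by
        have := (mem_Icc.1 (hval _ (hcellcol i hi))).2; omega⟩, rfl⟩
  have hCsub : ((Finset.range (b + 1)).image fun i => T (i + 1, 0)) ⊆ Finset.Icc 2 n := by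
    intro z hz
    obtain ⟨i, hi, rfl⟩ := mem_image.1 hz
    rw [mem_range] at hi
    exact mem_Icc.2 ⟨hcolge2 i hi, (mem_Icc.1 (hval _ (hcellcol i hi))).2⟩
  have hmnotC : T (1, 1) ∉ (Finset.range (b + 1)).image fun i => T (i + 1, 0) := by
    intro h
    obtain ⟨i, hi, hieq⟩ := mem_image.1 h
    rw [mem_range] at hi
    have := hinj _ (hcellcol i hi) _ hcell11 hieq
    rw [Prod.mk.injEq] at this
    omega
  have h2 : (T (1, 1), (Finset.range (b + 1)).image fun i => T (i + 1, 0)) ∈ encSet n := by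
    rw [encSet, mem_biUnion]
    refine ⟨T (1, 1), mem_Icc.2 ⟨hm2, (mem_Icc.1 (hval _ hcell11)).2⟩, ?_⟩
    rw [mem_image]
    refine ⟨_, ?_, rfl⟩
    rw [innerSet]
    refine (@Finset.mem_filter _ _ (fun _ => Classical.propDecidable _) _ _).2 ⟨mem_powerset.2 hCsub, hmnotC, ⟨T (1, 0), ?_, ?_⟩, ⟨T (0, 1), ?_, ?_, ?_⟩⟩
    · exact mem_image.2 ⟨0, mem_range.2 (by omega), rfl⟩
    · exact hrow (1, 0) (hcellcol 0 (by omega)) (1, 1) hcell11 rfl (by omega)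
    · refine mem_Icc.2 ⟨?_, (mem_Icc.1 (hval _ (hcellrow 1 (by omega)))).2⟩
      have h3 := hrow (0, 0) (hcellrow 0 (by omega)) (0, 1) (hcellrow 1 (by omega)) rfl
        (by omega)
      have h4 := (mem_Icc.1 (hval _ (hcellrow 0 (by omega)))).1
      omega
    · intro h
      obtain ⟨i, hi, hieq⟩ := mem_image.1 h
      rw [mem_range] at hi
      have := hinj _ (hcellcol i hi) _ (hcellrow 1 (by omega)) hieq
      rw [Prod.mk.injEq] at this
      omega
    · exact hcol (0, 1) (hcellrow 1 (by omega)) (1, 1) hcell11 rfl (by omega)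
  have h3 : ((Finset.range (b + 1)).image fun i => T (i + 1, 0)).card = b + 1 := by
    rw [Finset.card_image_of_injOn, card_range]
    intro i hi i' hi' h
    rw [mem_coe, mem_range] at hi hi'
    have := hinj _ (hcellcol i hi) _ (hcellcol i' hi') h
    rw [Prod.mk.injEq] at this
    omega
  refine ⟨h1, h2, h3, ?_⟩
  ext y
  simp only [mem_image, mem_range, mem_sdiff, mem_insert]
  constructor
  · rintro ⟨j, hj, rfl⟩
    refine ⟨hval _ (hcellrow j hj), ?_⟩
    rintro (h | ⟨i, hi, hieq⟩)
    · have := hinj _ (hcellrow j hj) _ hcell11 h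
      rw [Prod.mk.injEq] at this
      omega
    · have := hinj _ (hcellcol i hi) _ (hcellrow j hj) hieq
      rw [Prod.mk.injEq] at this
      omega
  · rintro ⟨hy, hy2⟩
    push_neg at hy2
    obtain ⟨p, hp, hpy⟩ := hB.surjOn (by rwa [← Finset.mem_coe] at hy)
    rw [mem_coe, mem_hookPlusCells] at hp
    obtain ⟨pi, pj⟩ := p
    rcases hp with ⟨hp1, hp2⟩ | heq | ⟨hp1, hp2, hp3⟩
    · simp only at hp1 hp2
      subst hp1
      exact ⟨pj, hp2, hpy⟩
    · rw [Prod.mk.injEq] at heq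
      obtain ⟨rfl, rfl⟩ := heq
      exact absurd hpy.symm hy2.1
    · exfalso
      simp only at hp1 hp2 hp3
      subst hp1
      exact hy2.2 (pi - 1) (by omega) (by rw [show pi - 1 + 1 = pi from by omega]; exact hpy)

theorem hookPlus_count (n : ℕ) (hn : 4 ≤ n) :
    Nat.card {T : ℕ × ℕ → ℕ // ∃ a b : ℕ, 2 ≤ a ∧ a + 2 + b = n ∧
        IsSYTOn (hookPlusCells a b) T} =
      (n - 4) * 2 ^ (n - 2) + 2 := by
  classical
  set S : Set (ℕ × ℕ → ℕ) := {T | ∃ a b : ℕ, 2 ≤ a ∧ a + 2 + b = n ∧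
    IsSYTOn (hookPlusCells a b) T} with hSdef
  set Φ : (ℕ × ℕ → ℕ) → ℕ × Finset ℕ :=
    fun T => (T (1, 1), ((Finset.Icc 1 n).image fun i => T (i, 0)).erase 0) with hΦdef
  have hinj : Set.InjOn Φ S := by
    intro T hT T' hT' hΦ
    obtain ⟨a, b, ha, habn, hS1⟩ := hT
    obtain ⟨a', b', ha', habn', hS1'⟩ := hT'
    obtain ⟨h1, h2, h3, h4⟩ := forward n a b T ha habn hS1
    obtain ⟨h1', h2', h3', h4'⟩ := forward n a' b' T' ha' habn' hS1'
    have hm : T (1, 1) = T' (1, 1) := congrArg Prod.fst hΦ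
    have hC : ((Finset.range (b + 1)).image fun i => T (i + 1, 0))
        = (Finset.range (b' + 1)).image fun i => T' (i + 1, 0) := by
      rw [← h1, ← h1']
      exact congrArg Prod.snd hΦ
    have hbb : b = b' := by
      have h5 := h3
      rw [hC, h3'] at h5
      omega
    subst hbb
    have haa : a = a' := by omega
    subst haa
    have hRim : ((Finset.range a).image fun j => T (0, j))
        = (Finset.range a).image fun j => T' (0, j) := by
      rw [h4, h4', hm, hC]
    have hcellcol : ∀ i, i < b + 1 → (i + 1, 0) ∈ hookPlusCells a b := fun i hi =>
      mem_hookPlusCells.2 (Or.inr (Or.inr ⟨rfl, by omega, by omega⟩))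
    have hcellrow : ∀ j, j < a → (0, j) ∈ hookPlusCells a b := fun j hj =>
      mem_hookPlusCells.2 (Or.inl ⟨rfl, hj⟩)
    have hcolMono : ∀ i j, i < j → j < b + 1 → T (i + 1, 0) < T (j + 1, 0) := fun i j hij hj =>
      hS1.2.2.1 _ (hcellcol i (by omega)) _ (hcellcol j hj) rfl (by omega)
    have hcolMono' : ∀ i j, i < j → j < b + 1 → T' (i + 1, 0) < T' (j + 1, 0) := fun i j hij hj =>
      hS1'.2.2.1 _ (hcellcol i (by omega)) _ (hcellcol j hj) rfl (by omega)
    have hrowMono : ∀ i j, i < j → j < a → T (0, i) < T (0, j) := fun i j hij hj =>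
      hS1.2.1 _ (hcellrow i (by omega)) _ (hcellrow j hj) rfl (by omega)
    have hrowMono' : ∀ i j, i < j → j < a → T' (0, i) < T' (0, j) := fun i j hij hj =>
      hS1'.2.1 _ (hcellrow i (by omega)) _ (hcellrow j hj) rfl (by omega)
    have hcoleq := enum_unique hcolMono hcolMono' hC
    have hroweq := enum_unique hrowMono hrowMono' hRim
    funext p
    by_cases hp : p ∈ hookPlusCells a b
    · rw [mem_hookPlusCells] at hp
      obtain ⟨pi, pj⟩ := p
      rcases hp with ⟨hp1, hp2⟩ | heq | ⟨hp1, hp2, hp3⟩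
      · simp only at hp1 hp2
        subst hp1
        exact hroweq pj hp2
      · rw [Prod.mk.injEq] at heq
        obtain ⟨rfl, rfl⟩ := heq
        exact hm
      · simp only at hp1 hp2 hp3
        subst hp1
        have := hcoleq (pi - 1) (by omega)
        rwa [show pi - 1 + 1 = pi from by omega] at this
    · rw [hS1.2.2.2 p hp, hS1'.2.2.2 p hp]
  have himage : Φ '' S = ↑(encSet n) := by
    ext p
    constructor
    · rintro ⟨T, hT, rfl⟩
      obtain ⟨a, b, ha, habn, hS1⟩ := hT
      obtain ⟨h1, h2, _, _⟩ := forward n a b T ha habn hS1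
      rw [Finset.mem_coe]
      show (T (1, 1), ((Finset.Icc 1 n).image fun i => T (i, 0)).erase 0) ∈ encSet n
      rw [h1]
      exact h2
    · intro hp
      rw [Finset.mem_coe, encSet, Finset.mem_biUnion] at hp
      obtain ⟨m, hm, hp⟩ := hp
      rw [Finset.mem_image] at hp
      obtain ⟨C, hC, rfl⟩ := hp
      rw [innerSet] at hC
      obtain ⟨hCsub, hmC, hx, hy⟩ :=
        (@Finset.mem_filter _ _ (fun _ => Classical.propDecidable _) _ _).1 hC
      rw [Finset.mem_powerset] at hCsub
      obtain ⟨T, hTS, hT11, hTC⟩ := construct n m C hn hCsub hm hmC hx hy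
      exact ⟨T, hTS, by rw [hΦdef]; simp only; rw [hT11, hTC]⟩
  calc Nat.card {T : ℕ × ℕ → ℕ // ∃ a b : ℕ, 2 ≤ a ∧ a + 2 + b = n ∧
        IsSYTOn (hookPlusCells a b) T} = S.ncard := Nat.card_coe_set_eq S
    _ = (Φ '' S).ncard := (Set.ncard_image_of_injOn hinj).symm
    _ = (↑(encSet n) : Set (ℕ × Finset ℕ)).ncard := by rw [himage]
    _ = (encSet n).card := Set.ncard_coe_finset _
    _ = (n - 4) * 2 ^ (n - 2) + 2 := encSet_card n hn
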